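/- Let G be a complete PE-CFG without ε expressions that is LL(1). Then the language of G interpreted as a CFG equals its language interpreted as a PEG: { x | ∃y, G xy ⤳CFG y } = { x | ∃y, G xy ⤳PEG y }. -/
import Mathlib


/-- Parsing expressions over non-terminals `V` and terminals `T`. -/
inductive PExp (V T : Type) : Type where
  | eps : PExp V T
  | term : T → PExp V T
  | var : V → PExp V T
  | cat : PExp V T → PExp V T → PExp V T
  | alt : PExp V T → PExp V T → PExp V T

/-- The relation `G[p] v ⤳CFG w`, where the PE-CFG is given by its production
function `P` (the initial expression is the first explicit argument). -/
inductive CFGMatch {V T : Type} (P : V → PExp V T) : PExp V T → List T → List T → Prop where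
  | empty (x : List T) : CFGMatch P .eps x x
  | term (a : T) (x : List T) : CFGMatch P (.term a) (a :: x) x
  | var {A : V} {v w : List T} : CFGMatch P (P A) v w → CFGMatch P (.var A) v w
  | cat {p₁ p₂ : PExp V T} {v u w : List T} :
      CFGMatch P p₁ v u → CFGMatch P p₂ u w → CFGMatch P (.cat p₁ p₂) v w
  | altL {p₁ p₂ : PExp V T} {v w : List T} :
      CFGMatch P p₁ v w → CFGMatch P (.alt p₁ p₂) v w
  | altR {p₁ p₂ : PExp V T} {v w : List T} :
      CFGMatch P p₂ v w → CFGMatch P (.alt p₁ p₂) v w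

/-- Result of a PEG match: either the remaining suffix of the input, or failure. -/
inductive Res (T : Type) : Type where
  | str : List T → Res T
  | fail : Res T

/-- The relation `G[p] x ⤳PEG X` (ordered choice, explicit failure). -/
inductive PEGMatch {V T : Type} (P : V → PExp V T) : PExp V T → List T → Res T → Prop where
  | empty (x : List T) : PEGMatch P .eps x (.str x)
  | termS (a : T) (x : List T) : PEGMatch P (.term a) (a :: x) (.str x)
  | termF {b a : T} (x : List T) : b ≠ a → PEGMatch P (.term b) (a :: x) .fail
  | termE (a : T) : PEGMatch P (.term a) [] .fail
  | var {A : V} {x : List T} {r : Res T} : PEGMatch P (P A) x r → PEGMatch P (.var A) x r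
  | catS {p₁ p₂ : PExp V T} {v u : List T} {r : Res T} :
      PEGMatch P p₁ v (.str u) → PEGMatch P p₂ u r → PEGMatch P (.cat p₁ p₂) v r
  | catF {p₁ p₂ : PExp V T} {v : List T} :
      PEGMatch P p₁ v .fail → PEGMatch P (.cat p₁ p₂) v .fail
  | ordS {p₁ p₂ : PExp V T} {v w : List T} :
      PEGMatch P p₁ v (.str w) → PEGMatch P (.alt p₁ p₂) v (.str w)
  | ordB {p₁ p₂ : PExp V T} {v w : List T} :
      PEGMatch P p₁ v .fail → PEGMatch P p₂ v (.str w) → PEGMatch P (.alt p₁ p₂) v (.str w)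
  | ordF {p₁ p₂ : PExp V T} {v : List T} :
      PEGMatch P p₁ v .fail → PEGMatch P p₂ v .fail → PEGMatch P (.alt p₁ p₂) v .fail

/-- `Subterm q p`: the expression `q` is a subexpression of `p`. -/
inductive Subterm {V T : Type} : PExp V T → PExp V T → Prop where
  | refl (p : PExp V T) : Subterm p p
  | catL {q p₁ p₂ : PExp V T} : Subterm q p₁ → Subterm q (.cat p₁ p₂)
  | catR {q p₁ p₂ : PExp V T} : Subterm q p₂ → Subterm q (.cat p₁ p₂)
  | altL {q p₁ p₂ : PExp V T} : Subterm q p₁ → Subterm q (.alt p₁ p₂)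
  | altR {q p₁ p₂ : PExp V T} : Subterm q p₂ → Subterm q (.alt p₁ p₂)

/-- `q` occurs in the grammar `(P, pS)`: it is a subexpression of the initial
expression `pS` or of some production `P A`. -/
def OccursIn {V T : Type} (P : V → PExp V T) (pS : PExp V T) (q : PExp V T) : Prop :=
  Subterm q pS ∨ ∃ A : V, Subterm q (P A)

/-- `FIRST^G(p)`: the terminals that can start a string matched by `G[p]`. -/
def FIRST {V T : Type} (P : V → PExp V T) (p : PExp V T) : Set T :=
  {a : T | ∃ x y : List T, CFGMatch P p (a :: (x ++ y)) y}

/-- The grammar `(P, pS)` has no `ε` expressions. -/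
def NoEps {V T : Type} (P : V → PExp V T) (pS : PExp V T) : Prop :=
  ¬ OccursIn P pS PExp.eps

/-- The grammar `(P, pS)` (without `ε` expressions) is LL(1): the `FIRST` sets
of the two alternatives of every choice occurring in the grammar are disjoint. -/
def IsLL1 {V T : Type} (P : V → PExp V T) (pS : PExp V T) : Prop :=
  ∀ q₁ q₂ : PExp V T, OccursIn P pS (.alt q₁ q₂) → FIRST P q₁ ∩ FIRST P q₂ = ∅

/-- The grammar `(P, pS)` is complete: every expression occurring in it either
succeeds or fails (as a PEG) on every input. -/
def Complete {V T : Type} (P : V → PExp V T) (pS : PExp V T) : Prop :=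
  ∀ p : PExp V T, OccursIn P pS p → ∀ x : List T,
    (∃ x' : List T, PEGMatch P p x (.str x')) ∨ PEGMatch P p x .fail

theorem Subterm.trans {V T : Type} {q p r : PExp V T} (h1 : Subterm q p)
    (h2 : Subterm p r) : Subterm q r := by
  induction h2 with
  | refl => exact h1
  | catL _ ih => exact .catL ih
  | catR _ ih => exact .catR ih
  | altL _ ih => exact .altL ih
  | altR _ ih => exact .altR ih

theorem occurs_mono {V T : Type} {P : V → PExp V T} {pS p q : PExp V T}
    (h : OccursIn P pS p) (hs : Subterm q p) : OccursIn P pS q := by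
  rcases h with h | ⟨A, h⟩
  · exact Or.inl (hs.trans h)
  · exact Or.inr ⟨A, hs.trans h⟩

theorem peg_to_cfg {V T : Type} {P : V → PExp V T} {p : PExp V T} {x : List T}
    {r : Res T} (h : PEGMatch P p x r) : ∀ y, r = .str y → CFGMatch P p x y := by
  induction h with
  | empty => exact fun y hy => by cases hy; exact .empty _
  | termS => exact fun y hy => by cases hy; exact .term _ _
  | termF => intro y hy; cases hy
  | termE => intro y hy; cases hy
  | var _ ih => exact fun y hy => .var (ih y hy)
  | catS _ _ ih1 ih2 => exact fun y hy => .cat (ih1 _ rfl) (ih2 y hy)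
  | catF => intro y hy; cases hy
  | ordS _ ih => exact fun y hy => .altL (ih y hy)
  | ordB _ _ _ ih => exact fun y hy => .altR (ih y hy)
  | ordF => intro y hy; cases hy

theorem cfg_suffix {V T : Type} {P : V → PExp V T} {p : PExp V T} {v w : List T}
    (h : CFGMatch P p v w) : ∃ u, v = u ++ w := by
  induction h with
  | empty => exact ⟨[], rfl⟩
  | term a x => exact ⟨[a], rfl⟩
  | var _ ih => exact ih
  | cat _ _ ih1 ih2 =>
      obtain ⟨u1, rfl⟩ := ih1; obtain ⟨u2, rfl⟩ := ih2
      exact ⟨u1 ++ u2, (List.append_assoc _ _ _).symm⟩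
  | altL _ ih => exact ih
  | altR _ ih => exact ih

theorem cfg_cons {V T : Type} {P : V → PExp V T} {pS : PExp V T}
    (hnoeps : NoEps P pS) {p : PExp V T} {v w : List T}
    (h : CFGMatch P p v w) (hocc : OccursIn P pS p) : ∃ a u, v = a :: (u ++ w) := by
  induction h with
  | empty => exact absurd hocc hnoeps
  | term a x => exact ⟨a, [], rfl⟩
  | @var A _ _ _ ih => exact ih (Or.inr ⟨A, .refl _⟩)
  | @cat p₁ p₂ v u w h1 h2 ih1 _ =>
      obtain ⟨a, u1, rfl⟩ := ih1 (occurs_mono hocc (.catL (.refl _)))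
      obtain ⟨u2, rfl⟩ := cfg_suffix h2
      exact ⟨a, u1 ++ u2, by simp⟩
  | altL _ ih => exact ih (occurs_mono hocc (.altL (.refl _)))
  | altR _ ih => exact ih (occurs_mono hocc (.altR (.refl _)))

theorem cfg_to_peg {V T : Type} {P : V → PExp V T} {pS : PExp V T}
    (hnoeps : NoEps P pS) (hll1 : IsLL1 P pS) (hcomplete : Complete P pS)
    {p : PExp V T} {v w : List T} (h : CFGMatch P p v w) (hocc : OccursIn P pS p) :
    PEGMatch P p v (.str w) := by
  induction h with
  | empty => exact absurd hocc hnoeps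
  | term a x => exact .termS a x
  | @var A _ _ _ ih => exact .var (ih (Or.inr ⟨A, .refl _⟩))
  | cat _ _ ih1 ih2 =>
      exact .catS (ih1 (occurs_mono hocc (.catL (.refl _))))
        (ih2 (occurs_mono hocc (.catR (.refl _))))
  | altL _ ih => exact .ordS (ih (occurs_mono hocc (.altL (.refl _))))
  | @altR p₁ p₂ v w h2 ih =>
      have hocc1 : OccursIn P pS p₁ := occurs_mono hocc (.altL (.refl _))
      have hpeg2 := ih (occurs_mono hocc (.altR (.refl _)))
      rcases hcomplete p₁ hocc1 v with ⟨x', hx'⟩ | hf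
      · exfalso
        have hc1 : CFGMatch P p₁ v x' := peg_to_cfg hx' x' rfl
        obtain ⟨a, u1, hv1⟩ := cfg_cons hnoeps hc1 hocc1
        obtain ⟨b, u2, hv2⟩ := cfg_cons hnoeps h2 (occurs_mono hocc (.altR (.refl _)))
        rw [hv1] at hv2
        obtain ⟨hab, -⟩ := List.cons.injEq .. ▸ hv2
        have ha1 : a ∈ FIRST P p₁ := ⟨u1, x', hv1 ▸ hc1⟩
        have hv3 : v = a :: (u2 ++ w) := by rw [hv1, hv2, hab]
        have ha2 : a ∈ FIRST P p₂ := ⟨u2, w, hv3 ▸ h2⟩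
        have := hll1 p₁ p₂ hocc
        exact absurd (Set.mem_inter ha1 ha2) (by rw [this]; exact Set.notMem_empty a)
      · exact .ordB hf hpeg2

/-- a complete LL(1) PE-CFG without `ε` expressions has the same
language interpreted as a CFG and as a PEG. -/
theorem stmt_8 {V T : Type} [Fintype V] [Fintype T]
    (P : V → PExp V T) (pS : PExp V T)
    (hnoeps : NoEps P pS) (hll1 : IsLL1 P pS) (hcomplete : Complete P pS) :
    {x : List T | ∃ y : List T, CFGMatch P pS (x ++ y) y} =
      {x : List T | ∃ y : List T, PEGMatch P pS (x ++ y) (.str y)} := by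
  ext x
  constructor
  · rintro ⟨y, hy⟩
    exact ⟨y, cfg_to_peg hnoeps hll1 hcomplete hy (Or.inl (.refl _))⟩
  · rintro ⟨y, hy⟩
    exact ⟨y, peg_to_cfg hy y rfl⟩
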